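/- For every ε with 0 < ε < 4⁻¹e⁻², the Lebesgue measure of Δ_ε in ℝ³ equals 4ε. -/

import Mathlib

open Filter MeasureTheory Matrix Set

/-- `Δ_ε = {(y,x₁,x₂) : 0 < y < 1, 1/(2e) < |x₁| < 1/2, 1/(2e) < |x₂| < 1/2, y|x₁||x₂| < ε}`. -/
noncomputable def Delta (ε : ℝ) : Set (Fin 3 → ℝ) :=
  {w | 0 < w 0 ∧ w 0 < 1 ∧ 1 / (2 * Real.exp 1) < |w 1| ∧ |w 1| < 1 / 2 ∧
    1 / (2 * Real.exp 1) < |w 2| ∧ |w 2| < 1 / 2 ∧ w 0 * |w 1| * |w 2| < ε}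

section aux

lemma mem_absIoo {a b x : ℝ} (ha : 0 < a) :
    (a < |x| ∧ |x| < b) ↔ x ∈ Set.Ioo (-b) (-a) ∪ Set.Ioo a b := by
  rcases le_or_gt 0 x with h | h
  · rw [abs_of_nonneg h]
    constructor
    · intro ⟨h1, h2⟩; exact Or.inr ⟨h1, h2⟩
    · rintro (⟨h1, h2⟩ | ⟨h1, h2⟩) <;> constructor <;> linarith
  · rw [abs_of_neg h]
    constructor
    · intro ⟨h1, h2⟩; exact Or.inl ⟨by linarith, by linarith⟩
    · rintro (⟨h1, h2⟩ | ⟨h1, h2⟩) <;> constructor <;> linarith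

lemma lintegral_absIoo {a b : ℝ} (ha : 0 < a) (hab : a < b) (c : ℝ) (hc : 0 ≤ c) :
    ∫⁻ x in (Set.Ioo (-b) (-a) ∪ Set.Ioo a b), ENNReal.ofReal (c / |x|)
      = ENNReal.ofReal (2 * c * Real.log (b / a)) := by
  have hmeas : Measurable fun x : ℝ => ENNReal.ofReal (c / |x|) := by
    exact (measurable_const.div measurable_id.abs).ennreal_ofReal
  have hdisj : Disjoint (Set.Ioo (-b) (-a)) (Set.Ioo a b) := by
    apply Set.disjoint_left.mpr
    rintro x ⟨_, h2⟩ ⟨h3, _⟩; linarith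
  rw [lintegral_union measurableSet_Ioo hdisj]
  have hpos : ∫⁻ x in Set.Ioo a b, ENNReal.ofReal (c / |x|)
      = ENNReal.ofReal (c * Real.log (b / a)) := by
    rw [setLIntegral_congr_fun measurableSet_Ioo
      (fun x hx => by
        rw [abs_of_pos (lt_trans ha hx.1)])]
    have hInt : IntegrableOn (fun x : ℝ => c / x) (Set.Ioo a b) := by
      apply IntegrableOn.mono_set _ Set.Ioo_subset_Icc_self
      apply ContinuousOn.integrableOn_Icc
      exact continuousOn_const.div continuousOn_id
        (fun x hx => ne_of_gt (lt_of_lt_of_le ha hx.1))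
    have hnn : 0 ≤ᵐ[volume.restrict (Set.Ioo a b)] fun x : ℝ => c / x := by
      filter_upwards [self_mem_ae_restrict measurableSet_Ioo] with x hx
      exact div_nonneg hc (le_of_lt (lt_trans ha hx.1))
    rw [← ofReal_integral_eq_lintegral_ofReal hInt hnn]
    congr 1
    rw [← integral_Ioc_eq_integral_Ioo, ← intervalIntegral.integral_of_le hab.le]
    have h0 : (0:ℝ) ∉ Set.uIcc a b := by
      rw [Set.uIcc_of_le hab.le]; intro h; exact absurd h.1 (not_le.mpr ha)
    simp_rw [div_eq_mul_inv]
    rw [intervalIntegral.integral_const_mul, integral_inv h0, div_eq_mul_inv]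
  have hneg : ∫⁻ x in Set.Ioo (-b) (-a), ENNReal.ofReal (c / |x|)
      = ENNReal.ofReal (c * Real.log (b / a)) := by
    rw [setLIntegral_congr_fun measurableSet_Ioo
      (fun x hx => by
        rw [abs_of_neg (by linarith [hx.2] : x < 0)])]
    have hInt : IntegrableOn (fun x : ℝ => c / (-x)) (Set.Ioo (-b) (-a)) := by
      apply IntegrableOn.mono_set _ Set.Ioo_subset_Icc_self
      apply ContinuousOn.integrableOn_Icc
      exact continuousOn_const.div continuousOn_id.neg
        (fun x hx => by intro h; nlinarith [hx.2])
    have hnn : 0 ≤ᵐ[volume.restrict (Set.Ioo (-b) (-a))] fun x : ℝ => c / (-x) := by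
      filter_upwards [self_mem_ae_restrict measurableSet_Ioo] with x hx
      exact div_nonneg hc (by linarith [hx.2])
    rw [← ofReal_integral_eq_lintegral_ofReal hInt hnn]
    congr 1
    rw [← integral_Ioc_eq_integral_Ioo,
      ← intervalIntegral.integral_of_le (by linarith : -b ≤ -a)]
    have h0 : (0:ℝ) ∉ Set.uIcc (-b) (-a) := by
      rw [Set.uIcc_of_le (by linarith : -b ≤ -a)]
      intro h; have h2 := h.2; linarith
    have heq : ∀ x : ℝ, c / (-x) = -(c * x⁻¹) := by
      intro x; rw [div_neg, div_eq_mul_inv]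
    simp_rw [heq]
    rw [intervalIntegral.integral_neg, intervalIntegral.integral_const_mul,
      integral_inv h0, neg_div_neg_eq]
    have hlogab : Real.log (a / b) = -Real.log (b / a) := by
      rw [← Real.log_inv, inv_div]
    rw [hlogab]; ring
  have hlog0 : 0 ≤ Real.log (b / a) := Real.log_nonneg ((one_le_div ha).mpr hab.le)
  rw [hpos, hneg, ← ENNReal.ofReal_add (mul_nonneg hc hlog0) (mul_nonneg hc hlog0)]
  congr 1; ring

end aux

theorem stmt12 (ε : ℝ) (hε0 : 0 < ε) (hε1 : ε < 4⁻¹ * Real.exp (-2)) :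
    volume (Delta ε) = ENNReal.ofReal (4 * ε) := by
  set a : ℝ := 1 / (2 * Real.exp 1) with ha_def
  set b : ℝ := 1 / 2 with hb_def
  have hexp : (1:ℝ) < Real.exp 1 := by
    have := Real.exp_one_gt_d9; linarith
  have ha : 0 < a := by positivity
  have hab : a < b := by
    rw [ha_def, hb_def, div_lt_div_iff₀ (by positivity) (by norm_num)]
    linarith
  have haa : a * a = 4⁻¹ * Real.exp (-2) := by
    rw [ha_def, Real.exp_neg]
    have : Real.exp 2 = Real.exp 1 * Real.exp 1 := by
      rw [← Real.exp_add]; norm_num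
    rw [this]
    have h1 : Real.exp 1 ≠ 0 := (Real.exp_pos 1).ne'
    field_simp
    ring
  set A : Set ℝ := Set.Ioo (-b) (-a) ∪ Set.Ioo a b with hA_def
  -- abs membership facts
  have hmemA : ∀ x ∈ A, a < |x| ∧ |x| < b := fun x hx => (mem_absIoo ha).mpr hx
  set T : Set ((ℝ × ℝ) × ℝ) :=
    {p | p.1.1 ∈ A ∧ p.1.2 ∈ A ∧ 0 < p.2 ∧ p.2 < ε / (|p.1.1| * |p.1.2|)} with hT_def
  have hT : MeasurableSet T := by
    apply MeasurableSet.inter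
    · exact ((measurableSet_Ioo.union measurableSet_Ioo).preimage
        (measurable_fst.fst))
    apply MeasurableSet.inter
    · exact ((measurableSet_Ioo.union measurableSet_Ioo).preimage
        (measurable_fst.snd))
    apply MeasurableSet.inter
    · exact measurableSet_lt measurable_const measurable_snd
    · exact measurableSet_lt measurable_snd
        (measurable_const.div ((measurable_fst.fst.abs).mul (measurable_fst.snd.abs)))
  -- measure preserving map
  set m : (Fin 3 → ℝ) → (ℝ × ℝ) × ℝ := fun w => ((w 1, w 2), w 0) with hm_def
  have hmp : MeasurePreserving m volume volume := by
    have h1 := volume_preserving_piFinSuccAbove (fun _ : Fin 3 => ℝ) 0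
    have h2 := (MeasurePreserving.id (volume : Measure ℝ)).prod
      (volume_preserving_finTwoArrow ℝ)
    have h3 : MeasurePreserving (Prod.swap : ℝ × (ℝ × ℝ) → (ℝ × ℝ) × ℝ)
        volume volume := by
      rw [Measure.volume_eq_prod, Measure.volume_eq_prod]
      exact Measure.measurePreserving_swap
    have key := (h3.comp h2).comp h1
    convert key using 1
    · rfl
    · funext w; rfl
  -- Delta = m ⁻¹' T
  have hDelta : Delta ε = m ⁻¹' T := by
    ext w
    simp only [Delta, Set.mem_setOf_eq, Set.mem_preimage, hT_def, hm_def]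
    constructor
    · rintro ⟨hy0, hy1, h1a, h1b, h2a, h2b, hprod⟩
      have hx1 : 0 < |w 1| := lt_trans ha h1a
      have hx2 : 0 < |w 2| := lt_trans ha h2a
      refine ⟨(mem_absIoo ha).mp ⟨h1a, h1b⟩, (mem_absIoo ha).mp ⟨h2a, h2b⟩, hy0, ?_⟩
      rw [lt_div_iff₀ (by positivity)]
      nlinarith
    · rintro ⟨hx1A, hx2A, hy0, hylt⟩
      obtain ⟨h1a, h1b⟩ := (mem_absIoo ha).mpr hx1A
      obtain ⟨h2a, h2b⟩ := (mem_absIoo ha).mpr hx2A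
      have hx1 : 0 < |w 1| := lt_trans ha h1a
      have hx2 : 0 < |w 2| := lt_trans ha h2a
      rw [lt_div_iff₀ (by positivity)] at hylt
      have hprodbig : 4⁻¹ * Real.exp (-2) < |w 1| * |w 2| := by
        rw [← haa]; nlinarith
      refine ⟨hy0, ?_, h1a, h1b, h2a, h2b, by nlinarith⟩
      nlinarith
  rw [hDelta, hmp.measure_preimage hT.nullMeasurableSet]
  -- now compute volume T
  rw [Measure.volume_eq_prod, Measure.prod_apply hT]
  have hsec : ∀ q : ℝ × ℝ, volume (Prod.mk q ⁻¹' T)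
      = Set.indicator (A ×ˢ A) (fun q => ENNReal.ofReal (ε / (|q.1| * |q.2|))) q := by
    intro q
    by_cases hq : q ∈ A ×ˢ A
    · rw [Set.indicator_of_mem hq]
      have : Prod.mk q ⁻¹' T = Set.Ioo 0 (ε / (|q.1| * |q.2|)) := by
        ext y
        simp only [Set.mem_preimage, hT_def, Set.mem_setOf_eq, Set.mem_Ioo]
        exact ⟨fun ⟨_, _, h3, h4⟩ => ⟨h3, h4⟩, fun ⟨h3, h4⟩ => ⟨hq.1, hq.2, h3, h4⟩⟩
      rw [this, Real.volume_Ioo, sub_zero]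
    · rw [Set.indicator_of_notMem hq]
      have : Prod.mk q ⁻¹' T = ∅ := by
        ext y
        simp only [Set.mem_preimage, hT_def, Set.mem_setOf_eq, Set.mem_empty_iff_false,
          iff_false]
        rintro ⟨h1, h2, _, _⟩
        exact hq ⟨h1, h2⟩
      rw [this, measure_empty]
  rw [lintegral_congr hsec]
  have hAm : MeasurableSet A := measurableSet_Ioo.union measurableSet_Ioo
  rw [lintegral_indicator (hAm.prod hAm)]
  have hfac : ∀ q : ℝ × ℝ, q ∈ A ×ˢ A → ENNReal.ofReal (ε / (|q.1| * |q.2|))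
      = ENNReal.ofReal (ε / |q.1|) * ENNReal.ofReal (1 / |q.2|) := by
    intro q hq
    rw [← ENNReal.ofReal_mul (by positivity)]
    congr 1
    have h1 : 0 < |q.1| := lt_trans ha (hmemA _ hq.1).1
    have h2 : 0 < |q.2| := lt_trans ha (hmemA _ hq.2).1
    field_simp
  rw [setLIntegral_congr_fun (hAm.prod hAm) hfac]
  rw [Measure.volume_eq_prod ℝ ℝ, ← Measure.prod_restrict]
  have hmf : Measurable fun x : ℝ => ENNReal.ofReal (ε / |x|) :=
    (measurable_const.div measurable_abs).ennreal_ofReal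
  have hmg : Measurable fun x : ℝ => ENNReal.ofReal (1 / |x|) :=
    (measurable_const.div measurable_abs).ennreal_ofReal
  rw [lintegral_prod_mul hmf.aemeasurable hmg.aemeasurable]
  rw [lintegral_absIoo ha hab ε hε0.le, lintegral_absIoo ha hab 1 one_pos.le]
  have hlog : Real.log (b / a) = 1 := by
    rw [ha_def, hb_def]
    have h1 : Real.exp 1 ≠ 0 := (Real.exp_pos 1).ne'
    have : (1/2 : ℝ) / (1 / (2 * Real.exp 1)) = Real.exp 1 := by field_simp
    rw [this, Real.log_exp]
  rw [hlog, ← ENNReal.ofReal_mul (by positivity)]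
  congr 1; ring
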